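/- For every integer n ≥ 2 and every ε ∈ (0,1), h(x, ε) tends to +∞ as x → 1 from the right, and h(x, ε) tends to −∞ as x → 1 from the left. -/

import Mathlib

/-- `k_n = (1/(4n)) · Σ_{k=1}^{n-1} 1/sin(kπ/n)` -/
noncomputable def kn (n : ℕ) : ℝ :=
  (1 / (4 * n)) * ∑ k ∈ Finset.Icc 1 (n - 1), 1 / Real.sin (k * Real.pi / n)

/-- `φ_k = (2k-1)π/n`, and `u_k = cos φ_k`. -/
noncomputable def phi (n k : ℕ) : ℝ := (2 * (k : ℝ) - 1) * Real.pi / n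

/-- The reduced central configuration function
`h(x, ε) = −n·k_n·(ε−x³)/(1−x³) − (x²/(1−x³))·Σ_{k=1}^{n} [x(1−ε) − (1−εx²)u_k]/(1+x²−2xu_k)^{3/2}`,
where `u_k = cos φ_k`.  Solutions of `h(x, ε) = μ` are the rosette central configurations. -/
noncomputable def h (n : ℕ) (x ε : ℝ) : ℝ :=
  -((n : ℝ) * kn n) * (ε - x ^ 3) / (1 - x ^ 3) -
    (x ^ 2 / (1 - x ^ 3)) * ∑ k ∈ Finset.Icc 1 n,
      (x * (1 - ε) - (1 - ε * x ^ 2) * Real.cos (phi n k)) /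
        (1 + x ^ 2 - 2 * x * Real.cos (phi n k)) ^ ((3 : ℝ) / 2)

open Real Filter Finset in

lemma recip_sin_convex {θ m : ℝ} (hθ : 0 < θ) (hc : 0 ≤ Real.cos θ)
    (h1 : 0 < m - θ) (h2 : m + θ < π) :
    1 / Real.sin m ≤ (1 / Real.sin (m - θ) + 1 / Real.sin (m + θ)) / 2 := by
  have hA : 0 < Real.sin (m - θ) := Real.sin_pos_of_pos_of_lt_pi h1 (by linarith)
  have hB : 0 < Real.sin (m + θ) := Real.sin_pos_of_pos_of_lt_pi (by linarith) h2
  have hm : 0 < Real.sin m := Real.sin_pos_of_pos_of_lt_pi (by linarith) (by linarith)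
  have e1 : Real.sin (m - θ) + Real.sin (m + θ) = 2 * Real.sin m * Real.cos θ := by
    rw [Real.sin_sub, Real.sin_add]; ring
  have e2 : Real.sin (m - θ) * Real.sin (m + θ) = Real.sin m ^ 2 - Real.sin θ ^ 2 := by
    rw [Real.sin_sub, Real.sin_add]
    linear_combination Real.sin m ^ 2 * Real.sin_sq_add_cos_sq θ -
      Real.sin θ ^ 2 * Real.sin_sq_add_cos_sq m
  have hsm : Real.sin m ≤ 1 := Real.sin_le_one m
  have hcle : Real.cos θ ≤ 1 := Real.cos_le_one θ
  have haux : (0:ℝ) ≤ (1 - Real.cos θ) * (1 + Real.cos θ - Real.sin m ^ 2) := by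
    apply mul_nonneg (by linarith)
    nlinarith [hm.le]
  have key : 2 * (Real.sin (m-θ) * Real.sin (m+θ)) ≤
      (Real.sin (m-θ) + Real.sin (m+θ)) * Real.sin m := by
    rw [e1, e2]
    nlinarith [Real.sin_sq_add_cos_sq θ, haux]
  rw [div_add_div _ _ hA.ne' hB.ne', div_div, div_le_div_iff₀ hm (by positivity)]
  nlinarith [key]

open Real Filter Finset in

lemma sum_odd_gt (n : ℕ) (hn : 2 ≤ n) :
    ∑ k ∈ Icc 1 (n-1), 1 / Real.sin (k * Real.pi / n) <
    ∑ k ∈ Icc 1 n, 1 / Real.sin (phi n k / 2) := by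
  have hn0 : (0:ℝ) < n := by positivity
  set θ : ℝ := π / (2*n) with hθdef
  have hθ : 0 < θ := by positivity
  set F : ℕ → ℝ := fun j => 1 / Real.sin (j * θ) with hF
  have hsinpos : ∀ j : ℕ, 1 ≤ j → j ≤ 2*n - 1 → 0 < Real.sin (j * θ) := by
    intro j hj1 hj2
    apply Real.sin_pos_of_pos_of_lt_pi
    · have : (1:ℝ) ≤ j := by exact_mod_cast hj1
      nlinarith
    · have hj : (j:ℝ) < 2*n := by exact_mod_cast Nat.lt_of_le_of_lt hj2 (by omega)
      have h2 : (2*(n:ℝ)) * θ = π := by rw [hθdef]; field_simp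
      nlinarith
  have hc : 0 ≤ Real.cos θ := by
    apply Real.cos_nonneg_of_mem_Icc
    constructor
    · linarith [Real.pi_pos]
    · have hn2 : (2:ℝ) ≤ n := by exact_mod_cast hn
      rw [hθdef, div_le_div_iff₀ (by positivity) (by norm_num)]
      nlinarith [Real.pi_pos]
  -- convert sums to range form
  have hE : ∑ k ∈ Icc 1 (n-1), 1 / Real.sin (k * Real.pi / n)
      = ∑ i ∈ range (n-1), F (2*i+2) := by
    rw [show Icc 1 (n-1) = Ico 1 n from by rw [← Finset.Ico_add_one_right_eq_Icc]; congr 1; omega,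
      Finset.sum_Ico_eq_sum_range]
    apply Finset.sum_congr rfl
    intro i _
    have : ((1+i : ℕ):ℝ) * π / n = ((2*i+2 : ℕ):ℝ) * θ := by
      push_cast; rw [hθdef]; field_simp; ring
    rw [this]
  have hO : ∑ k ∈ Icc 1 n, 1 / Real.sin (phi n k / 2)
      = ∑ i ∈ range n, F (2*i+1) := by
    rw [show Icc 1 n = Ico 1 (n+1) from (Finset.Ico_add_one_right_eq_Icc 1 n).symm,
      Finset.sum_Ico_eq_sum_range]
    simp only [Nat.add_sub_cancel]
    apply Finset.sum_congr rfl
    intro i _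
    have : phi n (1+i) / 2 = ((2*i+1 : ℕ):ℝ) * θ := by
      simp only [phi]; push_cast; rw [hθdef]; field_simp; ring
    rw [this]
  have mid : ∀ i ∈ range (n-1), F (2*i+2) ≤ (F (2*i+1) + F (2*i+3))/2 := by
    intro i hi
    have hi' : i < n - 1 := mem_range.mp hi
    have key := recip_sin_convex (θ := θ) (m := ((2*i+2 : ℕ):ℝ) * θ) hθ hc ?_ ?_
    · have eA : ((2*i+2 : ℕ):ℝ) * θ - θ = ((2*i+1 : ℕ):ℝ) * θ := by push_cast; ring
      have eB : ((2*i+2 : ℕ):ℝ) * θ + θ = ((2*i+3 : ℕ):ℝ) * θ := by push_cast; ring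
      rw [eA, eB] at key
      exact key
    · have : ((2*i+2 : ℕ):ℝ) * θ - θ = (2*(i:ℝ)+1) * θ := by push_cast; ring
      rw [this]; positivity
    · have hj : ((2*i+3 : ℕ):ℝ) < 2*n := by
        have : 2*i+3 < 2*n := by omega
        exact_mod_cast this
      have h2 : (2*(n:ℝ)) * θ = π := by rw [hθdef]; field_simp
      push_cast at hj ⊢
      nlinarith
  have hstep := Finset.sum_le_sum mid
  have hsplit : ∑ i ∈ range (n-1), (F (2*i+1) + F (2*i+3))/2
      = ((∑ i ∈ range (n-1), F (2*i+1)) + ∑ i ∈ range (n-1), F (2*i+3))/2 := by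
    rw [← Finset.sum_div, Finset.sum_add_distrib]
  have h1 : ∑ i ∈ range n, F (2*i+1)
      = ∑ i ∈ range (n-1), F (2*i+1) + F (2*(n-1)+1) := by
    have := Finset.sum_range_succ (fun i => F (2*i+1)) (n-1)
    rwa [show (n-1)+1 = n from by omega] at this
  have h2 : ∑ i ∈ range n, F (2*i+1)
      = ∑ i ∈ range (n-1), F (2*(i+1)+1) + F 1 := by
    have := Finset.sum_range_succ' (fun i => F (2*i+1)) (n-1)
    rwa [show (n-1)+1 = n from by omega] at this
  have hF1 : 0 < F 1 := by
    have := hsinpos 1 le_rfl (by omega)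
    simpa [F] using one_div_pos.mpr this
  have hFlast : 0 < F (2*(n-1)+1) := by
    have := hsinpos (2*(n-1)+1) (by omega) (by omega)
    simpa [F] using one_div_pos.mpr this
  have h3 : ∑ i ∈ range (n-1), F (2*(i+1)+1) = ∑ i ∈ range (n-1), F (2*i+3) := by
    apply Finset.sum_congr rfl; intro i _
    have e : 2*(i+1)+1 = 2*i+3 := by omega
    rw [e]
  rw [hE, hO]
  calc ∑ i ∈ range (n-1), F (2*i+2)
      ≤ ((∑ i ∈ range (n-1), F (2*i+1)) + ∑ i ∈ range (n-1), F (2*i+3))/2 := by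
        rw [← hsplit]; exact hstep
    _ < ∑ i ∈ range n, F (2*i+1) := by
        have e1 : ∑ i ∈ range (n-1), F (2*i+1) = (∑ i ∈ range n, F (2*i+1)) - F (2*(n-1)+1) := by
          linarith [h1]
        have e2 : ∑ i ∈ range (n-1), F (2*i+3) = (∑ i ∈ range n, F (2*i+1)) - F 1 := by
          rw [← h3]; linarith [h2]
        rw [e1, e2]; linarith

lemma half_angle (n k : ℕ) (hn : 2 ≤ n) (hk1 : 1 ≤ k) (hk2 : k ≤ n) :
    0 < Real.sin (phi n k / 2) ∧
    Real.cos (phi n k) = 1 - 2 * Real.sin (phi n k / 2) ^ 2 := by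
  have hn0 : (0:ℝ) < n := by positivity
  have hk1' : (1:ℝ) ≤ k := by exact_mod_cast hk1
  have hk2' : (k:ℝ) ≤ n := by exact_mod_cast hk2
  constructor
  · apply Real.sin_pos_of_pos_of_lt_pi
    · simp only [phi]
      have : (0:ℝ) < 2*(k:ℝ)-1 := by linarith
      positivity
    · simp only [phi]
      rw [div_div, div_lt_iff₀ (by positivity)]
      nlinarith [Real.pi_pos]
  · have e : phi n k = 2 * (phi n k / 2) := by ring
    conv_lhs => rw [e]
    rw [Real.cos_two_mul']
    linear_combination Real.sin_sq_add_cos_sq (phi n k / 2)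

lemma term_at_one (n k : ℕ) (hn : 2 ≤ n) (hk1 : 1 ≤ k) (hk2 : k ≤ n) (ε : ℝ) :
    ((1:ℝ) * (1 - ε) - (1 - ε * 1 ^ 2) * Real.cos (phi n k)) /
      (1 + 1 ^ 2 - 2 * 1 * Real.cos (phi n k)) ^ ((3 : ℝ) / 2)
    = ((1-ε)/4) * (1 / Real.sin (phi n k / 2)) := by
  obtain ⟨hs, hcos⟩ := half_angle n k hn hk1 hk2
  set s := Real.sin (phi n k / 2) with hsdef
  have hbase : (1:ℝ) + 1 ^ 2 - 2 * 1 * Real.cos (phi n k) = (2*s)^2 := by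
    rw [hcos]; ring
  have h8 : ((2*s)^2 : ℝ) ^ ((3:ℝ)/2) = 8 * s^3 := by
    rw [← Real.rpow_natCast (2*s) 2, ← Real.rpow_mul (by positivity : (0:ℝ) ≤ 2*s)]
    norm_num
    ring
  rw [hbase, h8, hcos]
  have hs0 : s ≠ 0 := hs.ne'
  field_simp
  ring


/-- For `n ≥ 2`, `ε ∈ (0,1)`: `h(x, ε) → +∞` as `x → 1⁺` and `h(x, ε) → −∞` as `x → 1⁻`. -/
theorem h_tendsto_at_one (n : ℕ) (hn : 2 ≤ n) (ε : ℝ) (hε : ε ∈ Set.Ioo (0 : ℝ) 1) :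
    Filter.Tendsto (fun x => h n x ε) (nhdsWithin 1 (Set.Ioi 1)) Filter.atTop ∧
    Filter.Tendsto (fun x => h n x ε) (nhdsWithin 1 (Set.Iio 1)) Filter.atBot := by
  obtain ⟨hε0, hε1⟩ := hε
  have hn0 : (n:ℝ) ≠ 0 := by positivity
  set N : ℝ → ℝ := fun x => -((n:ℝ) * kn n) * (ε - x^3) - x^2 * ∑ k ∈ Finset.Icc 1 n,
      (x * (1 - ε) - (1 - ε * x^2) * Real.cos (phi n k)) /
        (1 + x^2 - 2*x*Real.cos (phi n k)) ^ ((3:ℝ)/2) with hN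
  have hcont : ContinuousAt N 1 := by
    apply ContinuousAt.sub
    · fun_prop
    · apply ContinuousAt.mul (by fun_prop)
      apply tendsto_finset_sum
      intro k hk
      obtain ⟨hk1, hk2⟩ := Finset.mem_Icc.mp hk
      obtain ⟨hs, hcos⟩ := half_angle n k hn hk1 hk2
      apply ContinuousAt.div (by fun_prop)
      · exact ContinuousAt.rpow_const (by fun_prop) (Or.inr (by norm_num))
      · have hpos : (0:ℝ) < 1 + 1^2 - 2*1*Real.cos (phi n k) := by
          rw [hcos]; nlinarith [hs]
        exact (Real.rpow_pos_of_pos hpos _).ne'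
  have hsum1 : ∑ k ∈ Finset.Icc 1 n, ((1:ℝ) * (1 - ε) - (1 - ε * 1^2) * Real.cos (phi n k)) /
        (1 + 1^2 - 2*1*Real.cos (phi n k)) ^ ((3:ℝ)/2)
      = ((1-ε)/4) * ∑ k ∈ Finset.Icc 1 n, 1 / Real.sin (phi n k / 2) := by
    rw [Finset.mul_sum]
    apply Finset.sum_congr rfl
    intro k hk
    obtain ⟨hk1, hk2⟩ := Finset.mem_Icc.mp hk
    exact term_at_one n k hn hk1 hk2 ε
  have hkn : (n:ℝ) * kn n
      = (1/4) * ∑ k ∈ Finset.Icc 1 (n-1), 1 / Real.sin (k * Real.pi / n) := by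
    rw [kn]; field_simp; ring_nf
    exact Finset.sum_congr rfl fun x _ => by congr 2; ring
  have hval : N 1 = ((1-ε)/4) * ((∑ k ∈ Finset.Icc 1 (n-1), 1 / Real.sin (k*Real.pi/n))
      - ∑ k ∈ Finset.Icc 1 n, 1 / Real.sin (phi n k / 2)) := by
    simp only [hN]
    rw [hsum1, hkn]; ring
  have hEO := sum_odd_gt n hn
  have hN1 : N 1 < 0 := by
    rw [hval]
    apply mul_neg_of_pos_of_neg
    · have : (0:ℝ) < 1 - ε := by linarith
      positivity
    · linarith
  have hNt : Filter.Tendsto N (nhds 1) (nhds (N 1)) := hcont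
  constructor
  · have hd : Filter.Tendsto (fun x:ℝ => x^3 - 1) (nhdsWithin 1 (Set.Ioi 1))
        (nhdsWithin 0 (Set.Ioi 0)) := by
      apply tendsto_nhdsWithin_of_tendsto_nhds_of_eventually_within
      · have hc : ContinuousAt (fun x:ℝ => x^3 - 1) 1 := by fun_prop
        have ht := hc.tendsto
        norm_num at ht
        exact ht.mono_left nhdsWithin_le_nhds
      · filter_upwards [self_mem_nhdsWithin] with x hx
        have : (1:ℝ) < x^3 := one_lt_pow₀ hx (by norm_num)
        simpa using sub_pos.mpr this
    have hinv : Filter.Tendsto (fun x:ℝ => (x^3-1)⁻¹) (nhdsWithin 1 (Set.Ioi 1))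
        Filter.atTop := hd.inv_tendsto_nhdsGT_zero
    have hmul : Filter.Tendsto (fun x => (-N x) * (x^3-1)⁻¹) (nhdsWithin 1 (Set.Ioi 1))
        Filter.atTop :=
      Filter.Tendsto.pos_mul_atTop (by linarith : (0:ℝ) < -N 1)
        ((hNt.neg).mono_left nhdsWithin_le_nhds) hinv
    apply hmul.congr'
    filter_upwards [self_mem_nhdsWithin] with x hx
    have hx3 : (1:ℝ) < x^3 := one_lt_pow₀ hx (by norm_num)
    have h1 : (1:ℝ) - x^3 ≠ 0 := ne_of_lt (by linarith)
    have h2 : x^3 - (1:ℝ) ≠ 0 := ne_of_gt (by linarith)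
    simp only [h, hN]
    field_simp
    ring
  · have hd : Filter.Tendsto (fun x:ℝ => 1 - x^3) (nhdsWithin 1 (Set.Iio 1))
        (nhdsWithin 0 (Set.Ioi 0)) := by
      apply tendsto_nhdsWithin_of_tendsto_nhds_of_eventually_within
      · have hc : ContinuousAt (fun x:ℝ => 1 - x^3) 1 := by fun_prop
        have ht := hc.tendsto
        norm_num at ht
        exact ht.mono_left nhdsWithin_le_nhds
      · filter_upwards [self_mem_nhdsWithin,
          eventually_nhdsWithin_of_eventually_nhds (eventually_gt_nhds (by norm_num : (0:ℝ) < 1))]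
          with x hx hx0
        have : x^3 < 1 := pow_lt_one₀ hx0.le hx (by norm_num)
        simpa using sub_pos.mpr this
    have hinv : Filter.Tendsto (fun x:ℝ => (1-x^3)⁻¹) (nhdsWithin 1 (Set.Iio 1))
        Filter.atTop := hd.inv_tendsto_nhdsGT_zero
    have hmul : Filter.Tendsto (fun x => N x * (1-x^3)⁻¹) (nhdsWithin 1 (Set.Iio 1))
        Filter.atBot :=
      Filter.Tendsto.neg_mul_atTop hN1 (hNt.mono_left nhdsWithin_le_nhds) hinv
    apply hmul.congr'
    filter_upwards [self_mem_nhdsWithin,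
      eventually_nhdsWithin_of_eventually_nhds (eventually_gt_nhds (by norm_num : (0:ℝ) < 1))]
      with x hx hx0
    have hx3 : x^3 < 1 := pow_lt_one₀ hx0.le hx (by norm_num)
    have h1 : (1:ℝ) - x^3 ≠ 0 := ne_of_gt (by linarith)
    simp only [h, hN]
    field_simp
    ring
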